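/- Let (Aₙ) and (Bₙ) be sequences of real random variables such that, for each n, Aₙ and Bₙ are independent, and such that Aₙ converges in distribution to N(0,1) and Bₙ converges in distribution to N(0,1). Let (w₁ₙ), (w₂ₙ) be real sequences with w₁ₙ² + w₂ₙ² = 1 for all n and w₁ₙ → w₁, w₂ₙ → w₂ as n → ∞, and let (cₙ) be a sequence of real random variables converging to 0 in probability. Then w₁ₙAₙ + w₂ₙBₙ + cₙ converges in distribution to N(0,1). -/

import Mathlib

open MeasureTheory Filter

/-- Convergence in distribution: weak convergence of the push-forward laws, phrased via
integrals of bounded continuous functions. -/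
def TendstoInDistribution {Ω E : Type*} [MeasurableSpace Ω] [TopologicalSpace E] [MeasurableSpace E]
    (P : Measure Ω) (X : ℕ → Ω → E) (μ : Measure E) : Prop :=
  ∀ g : BoundedContinuousFunction E ℝ,
    Tendsto (fun n => ∫ ω, g (X n ω) ∂P) atTop (nhds (∫ x, g x ∂μ))

section Stmt9AuxSection
open ProbabilityTheory Set Metric
open scoped ENNReal NNReal

noncomputable section
namespace Stmt9Aux

variable {Ω : Type*} [MeasurableSpace Ω]

lemma integrable_comp {P : Measure Ω} [IsFiniteMeasure P] {X : Ω → ℝ} (hX : Measurable X)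
    {f : ℝ → ℝ} (hf : Continuous f) {C : ℝ} (hC : ∀ x, |f x| ≤ C) :
    Integrable (fun ω => f (X ω)) P :=
  ⟨(hf.measurable.comp hX).aestronglyMeasurable,
    HasFiniteIntegral.of_bounded (C := C) (Eventually.of_forall fun ω => by
      simpa [Real.norm_eq_abs] using hC (X ω))⟩

lemma unif_small {u : ℕ → ℝ → ℝ} {L : ℝ} (hL : 0 ≤ L)
    (hlip : ∀ n x y, |u n x - u n y| ≤ L * |x - y|)
    (hptw : ∀ x, Tendsto (fun n => u n x) atTop (nhds 0))
    (M : ℝ) {ε : ℝ} (hε : 0 < ε) :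
    ∀ᶠ n in atTop, ∀ x, |x| ≤ M → |u n x| ≤ ε := by
  set δ := ε / (2 * (L + 1)) with hδ
  have hδpos : 0 < δ := by positivity
  obtain ⟨t, ht⟩ := (isCompact_Icc (a := -M) (b := M)).elim_finite_subcover
    (fun a : ℝ => Metric.ball a δ) (fun a => Metric.isOpen_ball)
    (fun x _ => mem_iUnion.2 ⟨x, Metric.mem_ball_self hδpos⟩)
  have hev : ∀ᶠ n in atTop, ∀ a ∈ t, |u n a| ≤ ε / 2 := by
    rw [eventually_all_finset]
    intro a _
    have := Metric.tendsto_nhds.mp (hptw a) (ε / 2) (half_pos hε)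
    filter_upwards [this] with n hn
    rw [Real.dist_eq, sub_zero] at hn
    exact hn.le
  filter_upwards [hev] with n hn x hx
  have hx' : x ∈ Icc (-M) M := abs_le.mp hx
  obtain ⟨a, hat, hxa⟩ : ∃ a ∈ t, x ∈ Metric.ball a δ := by
    have := ht hx'
    simpa only [mem_iUnion, exists_prop] using this
  rw [Metric.mem_ball, Real.dist_eq] at hxa
  calc |u n x| ≤ |u n x - u n a| + |u n a| := by
        simpa using abs_add_le (u n x - u n a) (u n a)
    _ ≤ L * |x - a| + ε / 2 := add_le_add (hlip n x a) (hn a hat)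
    _ ≤ L * δ + ε / 2 := by nlinarith [abs_nonneg (x - a)]
    _ ≤ ε := by
        have h1 : L * (ε / (2 * (L + 1))) ≤ ε / 2 := by
          rw [mul_div_assoc', div_le_div_iff₀ (by positivity) (by norm_num)]
          nlinarith
        linarith

lemma key_bound {P : Measure Ω} [IsProbabilityMeasure P] {X Y : Ω → ℝ}
    (hX : Measurable X) (hY : Measurable Y) {f : ℝ → ℝ} (hf : Continuous f)
    {K C : ℝ} (hK : 0 ≤ K) (hC : 0 ≤ C) (hfl : ∀ x y, |f x - f y| ≤ K * |x - y|)
    (hfb : ∀ x, |f x| ≤ C) {δ : ℝ} (hδ : 0 < δ) :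
    |(∫ ω, f (Y ω) ∂P) - ∫ ω, f (X ω) ∂P|
      ≤ K * δ + 2 * C * (P {ω | δ < |Y ω - X ω|}).toReal := by
  have hiY := integrable_comp (P := P) hY hf hfb
  have hiX := integrable_comp (P := P) hX hf hfb
  set E := {ω | δ < |Y ω - X ω|} with hE
  have hEmeas : MeasurableSet E := measurableSet_lt measurable_const (hY.sub hX).abs
  have hbound : ∀ ω, |f (Y ω) - f (X ω)| ≤ K * δ + E.indicator (fun _ => 2 * C) ω := by
    intro ω
    by_cases hω : ω ∈ E
    · rw [indicator_of_mem hω]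
      have := abs_sub (f (Y ω)) (f (X ω))
      have h1 := hfb (Y ω); have h2 := hfb (X ω)
      have : |f (Y ω) - f (X ω)| ≤ 2 * C := by
        calc |f (Y ω) - f (X ω)| ≤ |f (Y ω)| + |f (X ω)| := abs_sub _ _
          _ ≤ 2 * C := by linarith
      nlinarith
    · rw [indicator_of_notMem hω, add_zero]
      have hle : |Y ω - X ω| ≤ δ := le_of_not_gt (by simpa [hE] using hω)
      calc |f (Y ω) - f (X ω)| ≤ K * |Y ω - X ω| := hfl _ _
        _ ≤ K * δ := by nlinarith
  calc |(∫ ω, f (Y ω) ∂P) - ∫ ω, f (X ω) ∂P|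
      = |∫ ω, (f (Y ω) - f (X ω)) ∂P| := by rw [integral_sub hiY hiX]
    _ ≤ ∫ ω, |f (Y ω) - f (X ω)| ∂P := by
        simpa [Real.norm_eq_abs] using norm_integral_le_integral_norm (fun ω => f (Y ω) - f (X ω))
    _ ≤ ∫ ω, (K * δ + E.indicator (fun _ => 2 * C) ω) ∂P := by
        refine integral_mono (hiY.sub hiX).abs ?_ hbound
        exact (integrable_const _).add ((integrable_const (2 * C)).indicator hEmeas)
    _ = K * δ + 2 * C * (P E).toReal := by
        rw [integral_add (integrable_const _) ((integrable_const (2 * C)).indicator hEmeas),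
          integral_const, integral_indicator_const _ hEmeas]
        simp [measure_univ, mul_comm, Measure.real]


lemma integrable_comp' {α : Type*} [MeasurableSpace α] {P : Measure α} [IsFiniteMeasure P]
    {f : α → ℝ} (hm : Measurable f) {C : ℝ} (hC : ∀ x, |f x| ≤ C) :
    Integrable f P :=
  ⟨hm.aestronglyMeasurable,
    HasFiniteIntegral.of_bounded (C := C) (Eventually.of_forall fun ω => by
      simpa [Real.norm_eq_abs] using hC ω)⟩

lemma tight {P : Measure Ω} [IsProbabilityMeasure P] {X : ℕ → Ω → ℝ}
    (hX : ∀ n, Measurable (X n)) {μ : Measure ℝ} [IsProbabilityMeasure μ]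
    (h : TendstoInDistribution P X μ) {ε : ℝ} (hε : 0 < ε) :
    ∃ M : ℝ, 0 < M ∧ ∀ᶠ n in atTop, (P {ω | M < |X n ω|}).toReal < ε := by
  -- choose a threshold where the limit measure has small tail
  have habs : Measurable fun x : ℝ => |x| := measurable_abs
  have hSmeas : ∀ k : ℕ, MeasurableSet {x : ℝ | (k : ℝ) ≤ |x|} :=
    fun k => measurableSet_le measurable_const habs
  have hiInter : (⋂ k : ℕ, {x : ℝ | (k : ℝ) ≤ |x|}) = ∅ := by
    ext x
    simp only [mem_iInter, mem_setOf_eq, mem_empty_iff_false, iff_false, not_forall, not_le]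
    obtain ⟨k, hk⟩ := exists_nat_gt |x|
    exact ⟨k, hk⟩
  have htend : Tendsto (fun k : ℕ => μ {x : ℝ | (k : ℝ) ≤ |x|}) atTop (nhds 0) := by
    have := tendsto_measure_iInter_atTop (μ := μ)
      (fun k => (hSmeas k).nullMeasurableSet)
      (fun k m hkm x hx => by
        simp only [mem_setOf_eq] at *
        exact le_trans (by exact_mod_cast Nat.cast_le.mpr hkm) hx)
      ⟨0, measure_ne_top _ _⟩
    rwa [hiInter, measure_empty] at this
  obtain ⟨k₀, hk₀⟩ : ∃ k : ℕ, μ {x : ℝ | (k : ℝ) ≤ |x|} < ENNReal.ofReal (ε / 2) := by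
    have := htend.eventually_lt_const (by positivity :
      (0 : ℝ≥0∞) < ENNReal.ofReal (ε / 2))
    exact this.exists
  set M₀ : ℝ := (k₀ : ℝ) with hM₀
  set g : ℝ → ℝ := fun x => min 1 (max (|x| - M₀) 0) with hg
  have hgcont : Continuous g := by
    apply Continuous.min continuous_const
    exact Continuous.max (by continuity) continuous_const
  have hg01 : ∀ x, 0 ≤ g x ∧ g x ≤ 1 := by
    intro x
    constructor
    · exact le_min (by norm_num) (le_max_right _ _)
    · exact min_le_left _ _
  have hgb : ∀ x, |g x| ≤ 1 := fun x => abs_le.2 ⟨by linarith [(hg01 x).1], (hg01 x).2⟩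
  set gb : BoundedContinuousFunction ℝ ℝ :=
    BoundedContinuousFunction.ofNormedAddCommGroup g hgcont 1
      (fun x => by simpa [Real.norm_eq_abs] using hgb x) with hgb'
  have hgval : ∀ x, gb x = g x := fun x => rfl
  -- ∫ g dμ < ε/2
  have hgle : ∫ x, g x ∂μ ≤ (μ {x : ℝ | M₀ ≤ |x|}).toReal := by
    have hind : ∀ x, g x ≤ ({x : ℝ | M₀ ≤ |x|}).indicator (fun _ => (1 : ℝ)) x := by
      intro x
      by_cases hx : M₀ ≤ |x|
      · rw [indicator_of_mem (show x ∈ {x : ℝ | M₀ ≤ |x|} from hx)]; exact (hg01 x).2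
      · rw [indicator_of_notMem (show x ∉ {x : ℝ | M₀ ≤ |x|} from hx)]
        have : |x| - M₀ < 0 := by simpa [sub_neg] using lt_of_not_ge hx
        simp only [hg]
        rw [max_eq_right this.le]
        norm_num
    calc ∫ x, g x ∂μ ≤ ∫ x, ({x : ℝ | M₀ ≤ |x|}).indicator (fun _ => (1 : ℝ)) x ∂μ := by
          refine integral_mono (integrable_comp' hgcont.measurable hgb) ?_ hind
          exact (integrable_const 1).indicator (hSmeas k₀)
      _ = (μ {x : ℝ | M₀ ≤ |x|}).toReal := by
          rw [integral_indicator_const _ (hSmeas k₀)]; simp [Measure.real, hM₀]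
  have hμlt : (μ {x : ℝ | M₀ ≤ |x|}).toReal < ε / 2 := by
    have := hk₀
    have hne : μ {x : ℝ | M₀ ≤ |x|} ≠ ⊤ := measure_ne_top _ _
    rw [← ENNReal.ofReal_toReal hne] at this
    exact lt_of_not_ge fun hcon => absurd this (not_lt.2 (ENNReal.ofReal_le_ofReal hcon))
  have hlim : ∫ x, gb x ∂μ < ε := by
    calc ∫ x, gb x ∂μ = ∫ x, g x ∂μ := rfl
      _ ≤ (μ {x : ℝ | M₀ ≤ |x|}).toReal := hgle
      _ < ε / 2 := hμlt
      _ < ε := by linarith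
  have hev : ∀ᶠ n in atTop, ∫ ω, gb (X n ω) ∂P < ε := (h gb).eventually_lt_const hlim
  refine ⟨M₀ + 1, by positivity, ?_⟩
  filter_upwards [hev] with n hn
  have hindic : ∀ ω, ({ω | M₀ + 1 < |X n ω|}).indicator (fun _ => (1 : ℝ)) ω ≤ g (X n ω) := by
    intro ω
    by_cases hω : M₀ + 1 < |X n ω|
    · rw [indicator_of_mem (show ω ∈ {ω | M₀ + 1 < |X n ω|} from hω)]
      have h1 : (1 : ℝ) ≤ |X n ω| - M₀ := by linarith
      simp only [hg]
      rw [max_eq_left (by linarith), min_eq_left h1]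
    · rw [indicator_of_notMem (show ω ∉ {ω | M₀ + 1 < |X n ω|} from hω)]
      exact (hg01 _).1
  have hsetmeas : MeasurableSet {ω | M₀ + 1 < |X n ω|} :=
    measurableSet_lt measurable_const (hX n).abs
  have : (P {ω | M₀ + 1 < |X n ω|}).toReal ≤ ∫ ω, g (X n ω) ∂P := by
    calc (P {ω | M₀ + 1 < |X n ω|}).toReal
        = ∫ ω, ({ω | M₀ + 1 < |X n ω|}).indicator (fun _ => (1 : ℝ)) ω ∂P := by
          rw [integral_indicator_const _ hsetmeas]; simp [Measure.real]
      _ ≤ ∫ ω, g (X n ω) ∂P := by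
          refine integral_mono ((integrable_const 1).indicator hsetmeas) ?_ hindic
          exact integrable_comp' (hgcont.measurable.comp (hX n)) (fun ω => hgb _)
  exact lt_of_le_of_lt this hn


/-- product of two standard gaussians as a density on the plane -/
lemma gauss_prod_eq :
    (gaussianReal 0 1).prod (gaussianReal 0 1)
      = (volume : Measure (ℝ × ℝ)).withDensity
          (fun p => gaussianPDF 0 1 p.1 * gaussianPDF 0 1 p.2) := by
  have hγ : gaussianReal 0 1 = volume.withDensity (gaussianPDF 0 1) :=
    gaussianReal_of_var_ne_zero 0 one_ne_zero
  refine Measure.prod_eq (fun s t hs ht => ?_)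
  rw [withDensity_apply _ (hs.prod ht)]
  rw [Measure.volume_eq_prod, ← Measure.prod_restrict]
  rw [lintegral_prod_mul ((measurable_gaussianPDF 0 1).aemeasurable)
    ((measurable_gaussianPDF 0 1).aemeasurable)]
  rw [hγ, withDensity_apply _ hs, withDensity_apply _ ht]

lemma pdf_mul_pdf {w₁ w₂ : ℝ} (h : w₁ ^ 2 + w₂ ^ 2 = 1) (p : ℝ × ℝ) :
    gaussianPDF 0 1 (w₁ * p.1 + w₂ * p.2) * gaussianPDF 0 1 (-w₂ * p.1 + w₁ * p.2)
      = gaussianPDF 0 1 p.1 * gaussianPDF 0 1 p.2 := by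
  simp only [gaussianPDF, ← ENNReal.ofReal_mul (gaussianPDFReal_nonneg _ _ _)]
  congr 1
  simp only [gaussianPDFReal, NNReal.coe_one, mul_one, sub_zero]
  rw [mul_mul_mul_comm, ← Real.exp_add, mul_mul_mul_comm, ← Real.exp_add]
  congr 2
  have : (w₁ * p.1 + w₂ * p.2) ^ 2 + (-w₂ * p.1 + w₁ * p.2) ^ 2 = p.1 ^ 2 + p.2 ^ 2 := by
    nlinarith [h]
  field_simp
  linarith [this]

/-- rotation invariance of the 2D standard gaussian, projected: the law of
`w₁ X + w₂ Y` for independent standard gaussians is standard gaussian. -/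
lemma gauss_rot {w₁ w₂ : ℝ} (h : w₁ ^ 2 + w₂ ^ 2 = 1) :
    ((gaussianReal 0 1).prod (gaussianReal 0 1)).map (fun p : ℝ × ℝ => w₁ * p.1 + w₂ * p.2)
      = gaussianReal 0 1 := by
  set T : (ℝ × ℝ) →ₗ[ℝ] (ℝ × ℝ) :=
    Matrix.toLin (Module.Basis.finTwoProd ℝ) (Module.Basis.finTwoProd ℝ) !![w₁, w₂; -w₂, w₁] with hT
  have hTapp : ∀ p : ℝ × ℝ, T p = (w₁ * p.1 + w₂ * p.2, -w₂ * p.1 + w₁ * p.2) := by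
    intro p; rw [hT, Matrix.toLin_finTwoProd_apply]
  have hdet : LinearMap.det T = 1 := by
    rw [hT, LinearMap.det_toLin, Matrix.det_fin_two_of]; nlinarith [h]
  have hvol : (volume : Measure (ℝ × ℝ)).map T = volume := by
    rw [Measure.map_linearMap_addHaar_eq_smul_addHaar _ (by rw [hdet]; norm_num), hdet]
    simp
  have hTmeas : Measurable T := T.continuous_of_finiteDimensional.measurable
  set F : ℝ × ℝ → ℝ≥0∞ := fun p => gaussianPDF 0 1 p.1 * gaussianPDF 0 1 p.2 with hF
  have hFmeas : Measurable F :=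
    ((measurable_gaussianPDF 0 1).comp measurable_fst).mul
      ((measurable_gaussianPDF 0 1).comp measurable_snd)
  have hFT : ∀ p, F (T p) = F p := by
    intro p; rw [hTapp]; exact pdf_mul_pdf h p
  have hrot : ((gaussianReal 0 1).prod (gaussianReal 0 1)).map T
      = (gaussianReal 0 1).prod (gaussianReal 0 1) := by
    rw [gauss_prod_eq]
    ext s hs
    rw [Measure.map_apply hTmeas hs, withDensity_apply _ (hTmeas hs), withDensity_apply _ hs]
    show ∫⁻ p in T ⁻¹' s, F p = ∫⁻ p in s, F p
    rw [← lintegral_indicator (hTmeas hs) F, ← lintegral_indicator hs F]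
    have : ∀ p, (T ⁻¹' s).indicator F p = (s.indicator F) (T p) := by
      intro p
      by_cases hp : T p ∈ s
      · rw [indicator_of_mem hp, indicator_of_mem (by exact hp), hFT]
      · rw [indicator_of_notMem hp, indicator_of_notMem (by exact hp)]
    simp_rw [this]
    rw [← lintegral_map (hFmeas.indicator hs) hTmeas, hvol]
  have hcomp : (fun p : ℝ × ℝ => w₁ * p.1 + w₂ * p.2) = Prod.fst ∘ T := by
    funext p; simp [hTapp]
  rw [hcomp, ← Measure.map_map measurable_fst hTmeas, hrot, Measure.map_fst_prod]
  simp


lemma tendsto_of_forall_lipschitz {P : Measure Ω} [IsProbabilityMeasure P]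
    {X : ℕ → Ω → ℝ} (hX : ∀ n, Measurable (X n)) {μ : Measure ℝ} [IsProbabilityMeasure μ]
    (h : ∀ (K C : ℝ) (f : ℝ → ℝ), Continuous f → (∀ x y, |f x - f y| ≤ K * |x - y|) →
      (∀ x, |f x| ≤ C) → Tendsto (fun n => ∫ ω, f (X n ω) ∂P) atTop (nhds (∫ x, f x ∂μ))) :
    TendstoInDistribution P X μ := by
  have hmap : ∀ n, IsProbabilityMeasure (P.map (X n)) :=
    fun n => Measure.isProbabilityMeasure_map (hX n).aemeasurable
  have hclosed : ∀ F : Set ℝ, IsClosed F →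
      limsup (fun n => P.map (X n) F) atTop ≤ μ F := by
    intro F hF
    rcases eq_empty_or_nonempty F with rfl | hFne
    · simp only [measure_empty, limsup_const]
      exact le_rfl
    refine ENNReal.le_of_forall_pos_le_add fun ε hε _ => ?_
    have hεR : (0 : ℝ) < (ε : ℝ) := hε
    set fk : ℕ → ℝ → ℝ := fun k x => max (1 - (k : ℝ) * infDist x F) 0 with hfk
    have hcont : ∀ k, Continuous (fk k) := by
      intro k
      exact Continuous.max (by
        exact (continuous_const.sub (continuous_const.mul (continuous_infDist_pt F)))) continuous_const
    have h01 : ∀ k x, 0 ≤ fk k x ∧ fk k x ≤ 1 := by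
      intro k x
      refine ⟨le_max_right _ _, ?_⟩
      have : (0 : ℝ) ≤ (k : ℝ) * infDist x F :=
        mul_nonneg (Nat.cast_nonneg k) (infDist_nonneg)
      rw [max_le_iff]
      constructor <;> linarith
    have hb : ∀ k x, |fk k x| ≤ 1 := fun k x => abs_le.2 ⟨by linarith [(h01 k x).1], (h01 k x).2⟩
    have hlip : ∀ k x y, |fk k x - fk k y| ≤ (k : ℝ) * |x - y| := by
      intro k x y
      have h1 : |fk k x - fk k y| ≤ |(1 - (k:ℝ) * infDist x F) - (1 - (k:ℝ) * infDist y F)| :=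
        abs_max_sub_max_le_abs _ _ _
      have h2 : (1 - (k:ℝ) * infDist x F) - (1 - (k:ℝ) * infDist y F)
          = (k : ℝ) * (infDist y F - infDist x F) := by ring
      have hd : |infDist y F - infDist x F| ≤ |x - y| := by
        rw [abs_sub_le_iff]
        constructor
        · have := infDist_le_infDist_add_dist (s := F) (x := y) (y := x)
          rw [Real.dist_eq] at this
          rw [abs_sub_comm]; linarith
        · have := infDist_le_infDist_add_dist (s := F) (x := x) (y := y)
          rw [Real.dist_eq] at this
          linarith
      calc |fk k x - fk k y| ≤ |(k : ℝ) * (infDist y F - infDist x F)| := by rw [← h2]; exact h1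
        _ = (k : ℝ) * |infDist y F - infDist x F| := by
            rw [abs_mul, Nat.abs_cast]
        _ ≤ (k : ℝ) * |x - y| := by
            exact mul_le_mul_of_nonneg_left hd (Nat.cast_nonneg k)
    have hptw : ∀ x, Tendsto (fun k => fk k x) atTop
        (nhds (F.indicator (fun _ => (1 : ℝ)) x)) := by
      intro x
      by_cases hx : x ∈ F
      · have hzero : infDist x F = 0 := ((hF.mem_iff_infDist_zero hFne).mp hx)
        have : ∀ k, fk k x = 1 := by
          intro k; simp only [hfk, hzero, mul_zero, sub_zero]; norm_num
        rw [indicator_of_mem hx]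
        simp only [this]
        exact tendsto_const_nhds
      · have hpos : 0 < infDist x F := by
          rcases lt_or_eq_of_le (infDist_nonneg (s := F) (x := x)) with h' | h'
          · exact h'
          · exact absurd ((hF.mem_iff_infDist_zero hFne).mpr h'.symm) hx
        rw [indicator_of_notMem hx]
        obtain ⟨N, hN⟩ := exists_nat_ge (1 / infDist x F)
        have hev : (fun k => fk k x) =ᶠ[atTop] (fun _ => (0 : ℝ)) := by
          filter_upwards [eventually_ge_atTop N] with k hk
          have hkR : (1 / infDist x F) ≤ (k : ℝ) := le_trans hN (by exact_mod_cast hk)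
          have : (1 : ℝ) ≤ (k : ℝ) * infDist x F := by
            rw [div_le_iff₀ hpos] at hkR; linarith
          simp only [hfk]
          rw [max_eq_right (by linarith)]
        exact Tendsto.congr' hev.symm tendsto_const_nhds
    have hdc : Tendsto (fun k => ∫ x, fk k x ∂μ) atTop
        (nhds (∫ x, F.indicator (fun _ => (1 : ℝ)) x ∂μ)) := by
      refine tendsto_integral_of_dominated_convergence (fun _ => (1 : ℝ))
        (fun k => ((hcont k).measurable).aestronglyMeasurable) (integrable_const 1)
        (fun k => Eventually.of_forall fun x => by
          simpa [Real.norm_eq_abs] using hb k x)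
        (Eventually.of_forall hptw)
    rw [integral_indicator_const _ hF.measurableSet, smul_eq_mul, mul_one] at hdc
    obtain ⟨k, hk⟩ := (hdc.eventually_lt_const
      (show (μ F).toReal < (μ F).toReal + (ε : ℝ) / 2 by linarith)).exists
    have hconv := h (k : ℝ) 1 (fk k) (hcont k) (hlip k) (hb k)
    have hev : ∀ᶠ n in atTop, ∫ ω, fk k (X n ω) ∂P < (μ F).toReal + (ε : ℝ) := by
      refine hconv.eventually_lt_const ?_
      linarith
    have hbnd : ∀ n, P.map (X n) F ≤ ENNReal.ofReal (∫ ω, fk k (X n ω) ∂P) := by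
      intro n
      rw [Measure.map_apply (hX n) hF.measurableSet]
      have hle : (P (X n ⁻¹' F)).toReal ≤ ∫ ω, fk k (X n ω) ∂P := by
        have hsm : MeasurableSet (X n ⁻¹' F) := (hX n) hF.measurableSet
        have hind : ∀ ω, (X n ⁻¹' F).indicator (fun _ => (1 : ℝ)) ω ≤ fk k (X n ω) := by
          intro ω
          by_cases hω : ω ∈ X n ⁻¹' F
          · rw [indicator_of_mem hω]
            have : infDist (X n ω) F = 0 := (hF.mem_iff_infDist_zero hFne).mp hω
            simp only [hfk, this, mul_zero, sub_zero]
            norm_num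
          · rw [indicator_of_notMem hω]
            exact (h01 k _).1
        calc (P (X n ⁻¹' F)).toReal
            = ∫ ω, (X n ⁻¹' F).indicator (fun _ => (1 : ℝ)) ω ∂P := by
              rw [integral_indicator_const _ hsm]; simp [Measure.real]
          _ ≤ ∫ ω, fk k (X n ω) ∂P := by
              refine integral_mono ((integrable_const 1).indicator hsm) ?_ hind
              exact integrable_comp' ((hcont k).measurable.comp (hX n)) (fun ω => hb k _)
      calc P (X n ⁻¹' F) = ENNReal.ofReal ((P (X n ⁻¹' F)).toReal) := by
            rw [ENNReal.ofReal_toReal (measure_ne_top _ _)]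
        _ ≤ ENNReal.ofReal (∫ ω, fk k (X n ω) ∂P) := ENNReal.ofReal_le_ofReal hle
    have hfinal : ∀ᶠ n in atTop, P.map (X n) F ≤ μ F + ε := by
      filter_upwards [hev] with n hn
      calc P.map (X n) F ≤ ENNReal.ofReal (∫ ω, fk k (X n ω) ∂P) := hbnd n
        _ ≤ ENNReal.ofReal ((μ F).toReal + (ε : ℝ)) := ENNReal.ofReal_le_ofReal hn.le
        _ = ENNReal.ofReal ((μ F).toReal) + ENNReal.ofReal (ε : ℝ) :=
            ENNReal.ofReal_add ENNReal.toReal_nonneg (le_of_lt hεR)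
        _ = μ F + ε := by
            rw [ENNReal.ofReal_toReal (measure_ne_top _ _), ENNReal.ofReal_coe_nnreal]
    exact limsup_le_of_le (by isBoundedDefault) hfinal
  set Pn : ℕ → ProbabilityMeasure ℝ := fun n => ⟨P.map (X n), hmap n⟩ with hPn
  set Q : ProbabilityMeasure ℝ := ⟨μ, inferInstance⟩ with hQ
  have hopen : ∀ G : Set ℝ, IsOpen G → Q G ≤ atTop.liminf (fun n => Pn n G) := by
    intro G hG
    have hENN : μ G ≤ atTop.liminf (fun n => P.map (X n) G) :=
      le_measure_liminf_of_limsup_measure_compl_le hG.measurableSet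
        (hclosed Gᶜ (isClosed_compl_iff.mpr hG))
    have aux : (ENNReal.ofNNReal (atTop.liminf fun n => Pn n G)) =
        atTop.liminf (fun n => ((Pn n G : ℝ≥0) : ℝ≥0∞)) := by
      refine Monotone.map_liminf_of_continuousAt ENNReal.coe_mono (fun n => Pn n G)
        ENNReal.continuous_coe.continuousAt ?_ ?_
      · exact IsBoundedUnder.isCoboundedUnder_ge
          ⟨1, eventually_map.2 (Eventually.of_forall fun n =>
            ProbabilityMeasure.apply_le_one _ _)⟩
      · exact ⟨0, eventually_map.2 (Eventually.of_forall fun n => zero_le)⟩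
    rw [← ENNReal.coe_le_coe, aux]
    have : ∀ n, ((Pn n G : ℝ≥0) : ℝ≥0∞) = P.map (X n) G := fun n =>
      ProbabilityMeasure.ennreal_coeFn_eq_coeFn_toMeasure _ _
    simp_rw [this]
    have hQG : ((Q G : ℝ≥0) : ℝ≥0∞) = μ G := ProbabilityMeasure.ennreal_coeFn_eq_coeFn_toMeasure _ _
    rw [hQG]
    exact hENN
  have htend := MeasureTheory.tendsto_of_forall_isOpen_le_liminf hopen
  have hint := ProbabilityMeasure.tendsto_iff_forall_integral_tendsto.mp htend
  intro g
  have hg := hint g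
  have hrw : ∀ n, ∫ x, g x ∂(Pn n : Measure ℝ) = ∫ ω, g (X n ω) ∂P := fun n =>
    integral_map (hX n).aemeasurable g.continuous.measurable.aestronglyMeasurable
  simp only [hrw] at hg
  exact hg


lemma sum_indep_tendsto {P : Measure Ω} [IsProbabilityMeasure P]
    {A B : ℕ → Ω → ℝ} (hA : ∀ n, Measurable (A n)) (hB : ∀ n, Measurable (B n))
    (hIndep : ∀ n, IndepFun (A n) (B n) P)
    (hAconv : TendstoInDistribution P A (gaussianReal 0 1))
    (hBconv : TendstoInDistribution P B (gaussianReal 0 1))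
    {w₁ w₂ : ℝ} (hw : w₁ ^ 2 + w₂ ^ 2 = 1)
    {K C : ℝ} {f : ℝ → ℝ} (hfc : Continuous f) (hK : 0 ≤ K) (hC : 0 ≤ C)
    (hfl : ∀ x y, |f x - f y| ≤ K * |x - y|) (hfb : ∀ x, |f x| ≤ C) :
    Tendsto (fun n => ∫ ω, f (w₁ * A n ω + w₂ * B n ω) ∂P) atTop
      (nhds (∫ x, f x ∂(gaussianReal 0 1))) := by
  set γ : Measure ℝ := gaussianReal 0 1 with hγ
  haveI : ∀ n, IsProbabilityMeasure (P.map (A n)) :=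
    fun n => Measure.isProbabilityMeasure_map (hA n).aemeasurable
  haveI : ∀ n, IsProbabilityMeasure (P.map (B n)) :=
    fun n => Measure.isProbabilityMeasure_map (hB n).aemeasurable
  set F : ℝ × ℝ → ℝ := fun p => f (w₁ * p.1 + w₂ * p.2) with hF
  have hFc : Continuous F := hfc.comp ((continuous_const.mul continuous_fst).add (continuous_const.mul continuous_snd))
  have hFb : ∀ p, |F p| ≤ C := fun p => hfb _
  set hh : ℝ → ℝ := fun a => ∫ b, f (w₁ * a + w₂ * b) ∂γ with hhh
  set hn : ℕ → ℝ → ℝ := fun n a => ∫ b, f (w₁ * a + w₂ * b) ∂(P.map (B n)) with hhn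
  -- common Lipschitz/bound facts for slice integrals
  have slice_lip : ∀ (ν : Measure ℝ), IsProbabilityMeasure ν → ∀ a a',
      |(∫ b, f (w₁ * a + w₂ * b) ∂ν) - ∫ b, f (w₁ * a' + w₂ * b) ∂ν| ≤ (K * |w₁|) * |a - a'| := by
    intro ν hν a a'
    haveI := hν
    have hint : ∀ t : ℝ, Integrable (fun b => f (w₁ * t + w₂ * b)) ν := fun t =>
      integrable_comp' ((hfc.comp (continuous_const.add (continuous_const.mul continuous_id))).measurable) (fun b => hfb _)
    rw [← integral_sub (hint a) (hint a')]
    calc |∫ b, (f (w₁ * a + w₂ * b) - f (w₁ * a' + w₂ * b)) ∂ν|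
        ≤ ∫ b, |f (w₁ * a + w₂ * b) - f (w₁ * a' + w₂ * b)| ∂ν := by
          simpa [Real.norm_eq_abs] using
            norm_integral_le_integral_norm (fun b => f (w₁ * a + w₂ * b) - f (w₁ * a' + w₂ * b))
      _ ≤ ∫ _b, (K * |w₁|) * |a - a'| ∂ν := by
          refine integral_mono ((hint a).sub (hint a')).abs (integrable_const _) ?_
          intro b
          calc |f (w₁ * a + w₂ * b) - f (w₁ * a' + w₂ * b)|
              ≤ K * |w₁ * a + w₂ * b - (w₁ * a' + w₂ * b)| := hfl _ _
            _ = (K * |w₁|) * |a - a'| := by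
                rw [show w₁ * a + w₂ * b - (w₁ * a' + w₂ * b) = w₁ * (a - a') by ring,
                  abs_mul]
                ring
      _ = (K * |w₁|) * |a - a'| := by simp [measure_univ]
  have slice_bdd : ∀ (ν : Measure ℝ), IsProbabilityMeasure ν → ∀ a,
      |∫ b, f (w₁ * a + w₂ * b) ∂ν| ≤ C := by
    intro ν hν a
    haveI := hν
    calc |∫ b, f (w₁ * a + w₂ * b) ∂ν| ≤ ∫ b, |f (w₁ * a + w₂ * b)| ∂ν := by
          simpa [Real.norm_eq_abs] using norm_integral_le_integral_norm (fun b => f (w₁ * a + w₂ * b))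
      _ ≤ ∫ _b, C ∂ν := by
          refine integral_mono ?_ (integrable_const _) (fun b => hfb _)
          exact (integrable_comp' ((hfc.comp (continuous_const.add (continuous_const.mul continuous_id))).measurable) (fun b => hfb _)).abs
      _ = C := by simp [measure_univ]
  have cont_of_lip : ∀ {g : ℝ → ℝ} {L : ℝ}, (∀ x y, |g x - g y| ≤ L * |x - y|) → Continuous g := by
    intro g L hg
    have : LipschitzWith (Real.toNNReal L) g := by
      apply LipschitzWith.of_dist_le_mul
      intro x y
      rw [Real.dist_eq, Real.dist_eq]
      exact le_trans (hg x y)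
        (mul_le_mul_of_nonneg_right (Real.le_coe_toNNReal L) (abs_nonneg _))
    exact this.continuous
  have hh_cont : Continuous hh := cont_of_lip (fun a a' => slice_lip γ inferInstance a a')
  have hn_cont : ∀ n, Continuous (hn n) := fun n =>
    cont_of_lip (fun a a' => slice_lip (P.map (B n)) inferInstance a a')
  -- Step 1: rewrite via independence and Fubini
  have hJ : ∀ n, ∫ ω, f (w₁ * A n ω + w₂ * B n ω) ∂P = ∫ a, hn n a ∂(P.map (A n)) := by
    intro n
    have hpair : P.map (fun ω => (A n ω, B n ω)) = (P.map (A n)).prod (P.map (B n)) :=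
      (indepFun_iff_map_prod_eq_prod_map_map (hA n).aemeasurable (hB n).aemeasurable).mp
        (hIndep n)
    have h1 : ∫ ω, f (w₁ * A n ω + w₂ * B n ω) ∂P
        = ∫ p, F p ∂(P.map (fun ω => (A n ω, B n ω))) := by
      rw [integral_map ((hA n).prodMk (hB n)).aemeasurable
        hFc.measurable.aestronglyMeasurable]
    rw [h1, hpair, integral_prod F (integrable_comp' hFc.measurable hFb)]
  -- Step 2: the limit integral identity via rotation invariance
  have hT : Measurable (fun p : ℝ × ℝ => w₁ * p.1 + w₂ * p.2) :=
    ((measurable_fst.const_mul w₁).add (measurable_snd.const_mul w₂))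
  have hhγ : ∫ a, hh a ∂γ = ∫ x, f x ∂γ := by
    have h1 : ∫ a, hh a ∂γ = ∫ p, F p ∂(γ.prod γ) :=
      (integral_prod F (integrable_comp' hFc.measurable hFb)).symm
    have h2 : ∫ p, F p ∂(γ.prod γ)
        = ∫ x, f x ∂((γ.prod γ).map (fun p : ℝ × ℝ => w₁ * p.1 + w₂ * p.2)) := by
      rw [integral_map hT.aemeasurable hfc.measurable.aestronglyMeasurable]
    rw [h1, h2]
    congr 1
    rw [hγ]
    exact gauss_rot hw
  -- Step 3: pointwise convergence of the slice integrals
  have hptw : ∀ a, Tendsto (fun n => hn n a - hh a) atTop (nhds 0) := by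
    intro a
    have hconta : Continuous fun b : ℝ => f (w₁ * a + w₂ * b) := hfc.comp (continuous_const.add (continuous_const.mul continuous_id))
    set gb : BoundedContinuousFunction ℝ ℝ := BoundedContinuousFunction.ofNormedAddCommGroup
      (fun b => f (w₁ * a + w₂ * b)) hconta C
      (fun b => by simpa [Real.norm_eq_abs] using hfb (w₁ * a + w₂ * b)) with hgb
    have hBg := hBconv gb
    have hrw : ∀ n, ∫ ω, gb (B n ω) ∂P = hn n a := fun n =>
      (integral_map (hB n).aemeasurable hconta.measurable.aestronglyMeasurable).symm
    have hlimval : ∫ x, gb x ∂γ = hh a := rfl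
    rw [hlimval] at hBg
    have : Tendsto (fun n => hn n a) atTop (nhds (hh a)) := by
      refine hBg.congr fun n => hrw n
    simpa using this.sub_const (hh a)
  -- equi-Lipschitz property of the differences
  have hulip : ∀ n x y, |(hn n x - hh x) - (hn n y - hh y)| ≤ (2 * (K * |w₁|)) * |x - y| := by
    intro n x y
    have h1 := slice_lip (P.map (B n)) inferInstance x y
    have h2 := slice_lip γ inferInstance x y
    calc |(hn n x - hh x) - (hn n y - hh y)| = |(hn n x - hn n y) - (hh x - hh y)| := by ring_nf
      _ ≤ |hn n x - hn n y| + |hh x - hh y| := abs_sub _ _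
      _ ≤ (K * |w₁|) * |x - y| + (K * |w₁|) * |x - y| := add_le_add h1 h2
      _ = (2 * (K * |w₁|)) * |x - y| := by ring
  -- main convergence
  have hlim1 : Tendsto (fun n => ∫ a, hh a ∂(P.map (A n))) atTop (nhds (∫ a, hh a ∂γ)) := by
    set hhb : BoundedContinuousFunction ℝ ℝ := BoundedContinuousFunction.ofNormedAddCommGroup
      hh hh_cont C (fun a => by
        simpa [Real.norm_eq_abs] using slice_bdd γ inferInstance a) with hhhb
    have hAg := hAconv hhb
    have hrw : ∀ n, ∫ ω, hhb (A n ω) ∂P = ∫ a, hh a ∂(P.map (A n)) := fun n =>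
      (integral_map (hA n).aemeasurable hh_cont.measurable.aestronglyMeasurable).symm
    have hlimval : ∫ x, hhb x ∂γ = ∫ a, hh a ∂γ := rfl
    rw [hlimval] at hAg
    exact hAg.congr fun n => hrw n
  have hdiff : Tendsto
      (fun n => (∫ a, hn n a ∂(P.map (A n))) - ∫ a, hh a ∂(P.map (A n))) atTop (nhds 0) := by
    rw [NormedAddCommGroup.tendsto_nhds_zero]
    intro ε hε
    obtain ⟨M, hMpos, hMev⟩ := tight hA hAconv
      (show (0:ℝ) < ε / (2 * (2 * C + 1)) by positivity)
    have huev := unif_small (u := fun n x => hn n x - hh x) (L := 2 * (K * |w₁|))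
      (by positivity) hulip hptw M (show (0:ℝ) < ε / 4 by positivity)
    filter_upwards [hMev, huev] with n hM hu
    have hsm : MeasurableSet {a : ℝ | M < |a|} := measurableSet_lt measurable_const measurable_abs
    have hinthn : Integrable (hn n) (P.map (A n)) :=
      integrable_comp' (hn_cont n).measurable (fun a => slice_bdd _ inferInstance a)
    have hinthh : Integrable hh (P.map (A n)) :=
      integrable_comp' hh_cont.measurable (fun a => slice_bdd _ inferInstance a)
    have hubd : ∀ a, |hn n a - hh a|
        ≤ ε / 4 + ({a : ℝ | M < |a|}).indicator (fun _ => 2 * C) a := by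
      intro a
      by_cases ha : M < |a|
      · rw [indicator_of_mem (show a ∈ {a : ℝ | M < |a|} from ha)]
        have := abs_sub (hn n a) (hh a)
        have h1 := slice_bdd (P.map (B n)) inferInstance a
        have h2 := slice_bdd γ inferInstance a
        have : |hn n a - hh a| ≤ 2 * C := by
          calc |hn n a - hh a| ≤ |hn n a| + |hh a| := abs_sub _ _
            _ ≤ 2 * C := by linarith
        linarith
      · rw [indicator_of_notMem (show a ∉ {a : ℝ | M < |a|} from ha), add_zero]
        exact hu a (le_of_not_gt ha)
    have htail : ((P.map (A n)) {a : ℝ | M < |a|}).toReal < ε / (2 * (2 * C + 1)) := by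
      have : (P.map (A n)) {a : ℝ | M < |a|} = P {ω | M < |A n ω|} := by
        rw [Measure.map_apply (hA n) hsm]
        rfl
      rw [this]
      exact hM
    calc ‖(∫ a, hn n a ∂(P.map (A n))) - ∫ a, hh a ∂(P.map (A n))‖
        = |∫ a, (hn n a - hh a) ∂(P.map (A n))| := by
          rw [integral_sub hinthn hinthh, Real.norm_eq_abs]
      _ ≤ ∫ a, |hn n a - hh a| ∂(P.map (A n)) := by
          simpa [Real.norm_eq_abs] using
            norm_integral_le_integral_norm (fun a => hn n a - hh a)
      _ ≤ ∫ a, (ε / 4 + ({a : ℝ | M < |a|}).indicator (fun _ => 2 * C) a) ∂(P.map (A n)) := by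
          refine integral_mono (hinthn.sub hinthh).abs ?_ hubd
          exact (integrable_const _).add ((integrable_const _).indicator hsm)
      _ = ε / 4 + 2 * C * ((P.map (A n)) {a : ℝ | M < |a|}).toReal := by
          rw [integral_add (integrable_const _) ((integrable_const _).indicator hsm),
            integral_const, integral_indicator_const _ hsm]
          simp [measure_univ, mul_comm, Measure.real]
      _ < ε := by
          have h2C : 2 * C * ((P.map (A n)) {a : ℝ | M < |a|}).toReal ≤ ε / 2 := by
            have ht0 : (0:ℝ) ≤ ((P.map (A n)) {a : ℝ | M < |a|}).toReal := ENNReal.toReal_nonneg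
            have hq : 2 * C * (ε / (2 * (2 * C + 1))) ≤ ε / 2 := by
              rw [mul_div_assoc', div_le_div_iff₀ (by positivity) (by norm_num)]
              nlinarith
            have h1 : 2 * C * ((P.map (A n)) {a : ℝ | M < |a|}).toReal
                ≤ 2 * C * (ε / (2 * (2 * C + 1))) :=
              mul_le_mul_of_nonneg_left htail.le (by linarith)
            linarith
          linarith
  have hmain : Tendsto (fun n => ∫ a, hn n a ∂(P.map (A n))) atTop (nhds (∫ x, f x ∂γ)) := by
    rw [← hhγ]
    have := hlim1.add hdiff
    simpa using this
  exact hmain.congr fun n => (hJ n).symm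


end Stmt9Aux
end
end Stmt9AuxSection

/-- **A Slutsky-type lemma.** If for each `n` the random variables `Aₙ` and `Bₙ` are
independent, `Aₙ →ᵈ N(0,1)`, `Bₙ →ᵈ N(0,1)`, the real weights satisfy
`w₁ₙ² + w₂ₙ² = 1` and converge, and `cₙ → 0` in probability, then
`w₁ₙAₙ + w₂ₙBₙ + cₙ →ᵈ N(0,1)`. -/
theorem stmt_9 {Ω : Type*} [MeasurableSpace Ω] (P : Measure Ω) [IsProbabilityMeasure P]
    (A B c : ℕ → Ω → ℝ)
    (hA : ∀ n, Measurable (A n)) (hB : ∀ n, Measurable (B n)) (hc : ∀ n, Measurable (c n))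
    (hIndep : ∀ n, ProbabilityTheory.IndepFun (A n) (B n) P)
    (hAconv : TendstoInDistribution P A (ProbabilityTheory.gaussianReal 0 1))
    (hBconv : TendstoInDistribution P B (ProbabilityTheory.gaussianReal 0 1))
    (w₁ w₂ : ℕ → ℝ) (hw : ∀ n, (w₁ n) ^ 2 + (w₂ n) ^ 2 = 1)
    (w₁' w₂' : ℝ) (hw₁ : Tendsto w₁ atTop (nhds w₁')) (hw₂ : Tendsto w₂ atTop (nhds w₂'))
    (hcProb : ∀ ε > (0 : ℝ), Tendsto (fun n => P {ω | ε < |c n ω|}) atTop (nhds 0)) :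
    TendstoInDistribution P (fun n ω => w₁ n * A n ω + w₂ n * B n ω + c n ω)
      (ProbabilityTheory.gaussianReal 0 1) := by
  classical
  have hw' : w₁' ^ 2 + w₂' ^ 2 = 1 := by
    have h1 : Tendsto (fun n => w₁ n ^ 2 + w₂ n ^ 2) atTop (nhds (w₁' ^ 2 + w₂' ^ 2)) :=
      (hw₁.pow 2).add (hw₂.pow 2)
    have h2 : Tendsto (fun n => w₁ n ^ 2 + w₂ n ^ 2) atTop (nhds 1) := by
      simp only [hw]; exact tendsto_const_nhds
    exact tendsto_nhds_unique h1 h2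
  set Y : ℕ → Ω → ℝ := fun n ω => w₁ n * A n ω + w₂ n * B n ω + c n ω with hY
  set X : ℕ → Ω → ℝ := fun n ω => w₁' * A n ω + w₂' * B n ω with hX
  have hYm : ∀ n, Measurable (Y n) := fun n =>
    (((hA n).const_mul (w₁ n)).add ((hB n).const_mul (w₂ n))).add (hc n)
  have hXm : ∀ n, Measurable (X n) := fun n =>
    ((hA n).const_mul w₁').add ((hB n).const_mul w₂')
  apply Stmt9Aux.tendsto_of_forall_lipschitz hYm
  intro K C f hfc hfl hfb
  have hK : 0 ≤ K := by
    have := hfl 0 1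
    simp only [zero_sub, abs_neg, abs_one, mul_one] at this
    exact le_trans (abs_nonneg _) this
  have hC : 0 ≤ C := le_trans (abs_nonneg (f 0)) (hfb 0)
  have hXconv : Tendsto (fun n => ∫ ω, f (X n ω) ∂P) atTop
      (nhds (∫ x, f x ∂(ProbabilityTheory.gaussianReal 0 1))) :=
    Stmt9Aux.sum_indep_tendsto hA hB hIndep hAconv hBconv hw' hfc hK hC hfl hfb
  -- Yₙ - Xₙ → 0 in probability
  have hprob : ∀ δ : ℝ, 0 < δ → ∀ ε : ℝ, 0 < ε →
      ∀ᶠ n in atTop, (P {ω | δ < |Y n ω - X n ω|}).toReal < ε := by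
    intro δ hδ ε hε
    -- tails of A and B
    obtain ⟨M₁, hM₁pos, hM₁ev⟩ := Stmt9Aux.tight hA hAconv (show (0:ℝ) < ε/3 by positivity)
    obtain ⟨M₂, hM₂pos, hM₂ev⟩ := Stmt9Aux.tight hB hBconv (show (0:ℝ) < ε/3 by positivity)
    have hw₁ev : ∀ᶠ n in atTop, |w₁ n - w₁'| ≤ δ / (3 * M₁) := by
      have := Metric.tendsto_atTop.mp hw₁ (δ / (3 * M₁)) (by positivity)
      obtain ⟨N, hN⟩ := this
      filter_upwards [eventually_ge_atTop N] with n hn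
      have := hN n hn
      rw [Real.dist_eq] at this
      exact this.le
    have hw₂ev : ∀ᶠ n in atTop, |w₂ n - w₂'| ≤ δ / (3 * M₂) := by
      have := Metric.tendsto_atTop.mp hw₂ (δ / (3 * M₂)) (by positivity)
      obtain ⟨N, hN⟩ := this
      filter_upwards [eventually_ge_atTop N] with n hn
      have := hN n hn
      rw [Real.dist_eq] at this
      exact this.le
    have hcev : ∀ᶠ n in atTop, (P {ω | δ/3 < |c n ω|}).toReal < ε/3 := by
      have := (hcProb (δ/3) (by positivity)).eventually_lt_const
        (show (0:ENNReal) < ENNReal.ofReal (ε/3) from ENNReal.ofReal_pos.mpr (by positivity))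
      filter_upwards [this] with n hn
      exact ENNReal.toReal_lt_of_lt_ofReal hn
    filter_upwards [hM₁ev, hM₂ev, hw₁ev, hw₂ev, hcev] with n h1 h2 h3 h4 h5
    -- inclusion into three events
    set E₁ : Set Ω := {ω | M₁ < |A n ω|} with hE₁
    set E₂ : Set Ω := {ω | M₂ < |B n ω|} with hE₂
    set E₃ : Set Ω := {ω | δ/3 < |c n ω|} with hE₃
    have hsub : {ω | δ < |Y n ω - X n ω|} ⊆ E₁ ∪ E₂ ∪ E₃ := by
      intro ω hω
      simp only [Set.mem_setOf_eq] at hω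
      by_contra hcon
      simp only [Set.mem_union, not_or, hE₁, hE₂, hE₃, Set.mem_setOf_eq, not_lt] at hcon
      obtain ⟨⟨hA', hB'⟩, hc'⟩ := hcon
      have key : Y n ω - X n ω = (w₁ n - w₁') * A n ω + (w₂ n - w₂') * B n ω + c n ω := by
        simp only [hY, hX]; ring
      have b1 : |(w₁ n - w₁') * A n ω| ≤ δ/3 := by
        rw [abs_mul]
        calc |w₁ n - w₁'| * |A n ω| ≤ (δ / (3 * M₁)) * M₁ :=
              mul_le_mul h3 hA' (abs_nonneg _) (by positivity)
          _ = δ/3 := by field_simp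
      have b2 : |(w₂ n - w₂') * B n ω| ≤ δ/3 := by
        rw [abs_mul]
        calc |w₂ n - w₂'| * |B n ω| ≤ (δ / (3 * M₂)) * M₂ :=
              mul_le_mul h4 hB' (abs_nonneg _) (by positivity)
          _ = δ/3 := by field_simp
      have : |Y n ω - X n ω| ≤ δ := by
        rw [key]
        calc |(w₁ n - w₁') * A n ω + (w₂ n - w₂') * B n ω + c n ω|
            ≤ |(w₁ n - w₁') * A n ω + (w₂ n - w₂') * B n ω| + |c n ω| := abs_add_le _ _
          _ ≤ |(w₁ n - w₁') * A n ω| + |(w₂ n - w₂') * B n ω| + |c n ω| := by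
              linarith [abs_add_le ((w₁ n - w₁') * A n ω) ((w₂ n - w₂') * B n ω)]
          _ ≤ δ/3 + δ/3 + δ/3 := by linarith
          _ = δ := by ring
      linarith
    have hmeasle : P {ω | δ < |Y n ω - X n ω|} ≤ P E₁ + P E₂ + P E₃ :=
      le_trans (measure_mono hsub) (le_trans (measure_union_le _ _)
        (add_le_add (measure_union_le _ _) le_rfl))
    have hfin : P E₁ + P E₂ + P E₃ ≠ ⊤ := by
      simp [ENNReal.add_ne_top, measure_ne_top]
    calc (P {ω | δ < |Y n ω - X n ω|}).toReal
        ≤ (P E₁ + P E₂ + P E₃).toReal := ENNReal.toReal_mono hfin hmeasle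
      _ = (P E₁).toReal + (P E₂).toReal + (P E₃).toReal := by
          rw [ENNReal.toReal_add (by simp [ENNReal.add_ne_top, measure_ne_top]) (measure_ne_top _ _),
            ENNReal.toReal_add (measure_ne_top _ _) (measure_ne_top _ _)]
      _ < ε/3 + ε/3 + ε/3 := by
          refine add_lt_add (add_lt_add h1 h2) h5
      _ = ε := by ring
  -- difference of integrals tends to zero
  have hdiff0 : Tendsto (fun n => (∫ ω, f (Y n ω) ∂P) - ∫ ω, f (X n ω) ∂P) atTop (nhds 0) := by
    rw [NormedAddCommGroup.tendsto_nhds_zero]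
    intro ε hε
    set δ : ℝ := ε / (2 * (K + 1)) with hδdef
    have hδ : 0 < δ := by positivity
    filter_upwards [hprob δ hδ (ε / (2 * (2 * C + 1))) (by positivity)] with n hn
    have hkb := Stmt9Aux.key_bound (P := P) (hXm n) (hYm n) hfc hK hC hfl hfb hδ
    have hKδ : K * δ < ε / 2 := by
      rw [hδdef, mul_div_assoc', div_lt_div_iff₀ (by positivity) (by norm_num)]
      nlinarith
    have h2C : 2 * C * (P {ω | δ < |Y n ω - X n ω|}).toReal ≤ ε / 2 := by
      have ht0 : (0:ℝ) ≤ (P {ω | δ < |Y n ω - X n ω|}).toReal := ENNReal.toReal_nonneg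
      have hq : 2 * C * (ε / (2 * (2 * C + 1))) ≤ ε / 2 := by
        rw [mul_div_assoc', div_le_div_iff₀ (by positivity) (by norm_num)]
        nlinarith
      have h1 : 2 * C * (P {ω | δ < |Y n ω - X n ω|}).toReal
          ≤ 2 * C * (ε / (2 * (2 * C + 1))) :=
        mul_le_mul_of_nonneg_left hn.le (by linarith)
      linarith
    rw [Real.norm_eq_abs]
    calc |(∫ ω, f (Y n ω) ∂P) - ∫ ω, f (X n ω) ∂P|
        ≤ K * δ + 2 * C * (P {ω | δ < |Y n ω - X n ω|}).toReal := hkb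
      _ < ε := by linarith
  have := hXconv.add hdiff0
  simp only [add_zero] at this
  refine this.congr fun n => ?_
  ring
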